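/- Let Γ act by isometries on a hyperbolic space X fixing a boundary point ξ, and let β_ξ be the Busemann quasicharacter. If g ∈ Γ_ξ satisfies β_ξ(g) > 0, then g is a hyperbolic isometry with attracting fixed point ξ; if β_ξ(g) ≠ 0 then g is hyperbolic; and conversely every hyperbolic element of Γ_ξ satisfies β_ξ(g) ≠ 0. -/

import Mathlib

open Filter

/-- The Gromov product `(y|z)_x`. -/
noncomputable def gp {X : Type*} [MetricSpace X] (x y z : X) : ℝ :=
  (dist x y + dist x z - dist y z) / 2

/-- An isometry `g` of a metric space is hyperbolic if its stable translation length
`lim dist(x, gⁿ x)/n` is positive. -/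
def IsHyperbolicIsom {X : Type*} [MetricSpace X] (g : X ≃ᵢ X) : Prop :=
  ∀ x : X, ∃ ℓ : ℝ, 0 < ℓ ∧
    Tendsto (fun n : ℕ => dist x ((⇑g)^[n] x) / n) atTop (nhds ℓ)

section Aux

variable {X : Type*} [MetricSpace X]

lemma gp_symm (x y z : X) : gp x y z = gp x z y := by
  simp only [gp, dist_comm y z]
  ring

lemma gp_base (x x' y z : X) : gp x y z - dist x x' ≤ gp x' y z := by
  have h1 : dist x y ≤ dist x x' + dist x' y := dist_triangle x x' y
  have h2 : dist x z ≤ dist x x' + dist x' z := dist_triangle x x' z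
  simp only [gp]
  linarith

lemma gp_isom (g : X ≃ᵢ X) (a b c : X) : gp (g a) (g b) (g c) = gp a b c := by
  simp [gp, IsometryEquiv.dist_eq]

/-- characterization of joint divergence -/
lemma joint_iff {f : ℕ × ℕ → ℝ} :
    Tendsto f atTop atTop ↔ ∀ C : ℝ, ∃ N K : ℕ, ∀ n k, N ≤ n → K ≤ k → C ≤ f (n, k) := by
  rw [tendsto_atTop]
  constructor
  · intro H C
    obtain ⟨a, ha⟩ := eventually_atTop.1 (H C)
    exact ⟨a.1, a.2, fun n k hn hk => ha (n, k) ⟨hn, hk⟩⟩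
  · intro H C
    obtain ⟨N, K, hNK⟩ := H C
    exact eventually_atTop.2 ⟨(N, K), fun b hb => hNK b.1 b.2 hb.1 hb.2⟩

lemma joint_swap {f : ℕ × ℕ → ℝ} (h : Tendsto f atTop atTop) :
    Tendsto (fun p : ℕ × ℕ => f (p.2, p.1)) atTop atTop := by
  rw [joint_iff] at h ⊢
  intro C
  obtain ⟨N, K, hNK⟩ := h C
  exact ⟨K, N, fun n k hn hk => hNK k n hk hn⟩

/-- Horokernels along two sequences converging to the same boundary point differ by at
most `2δ`. -/
lemma horo_comp (δ : ℝ)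
    (hδ : ∀ x y z w : X, min (gp x y w) (gp x w z) - δ ≤ gp x y z)
    (x₀ : X) (u v : ℕ → X)
    (huv : Tendsto (fun p : ℕ × ℕ => gp x₀ (u p.1) (v p.2)) atTop atTop)
    (y z : X) (c c' : ℝ)
    (hc : Tendsto (fun n => dist y (u n) - dist z (u n)) atTop (nhds c))
    (hc' : Tendsto (fun n => dist y (v n) - dist z (v n)) atTop (nhds c')) :
    c ≤ c' + 2 * δ := by
  have Hu : Tendsto (fun n => gp z y (u n)) atTop (nhds ((dist z y - c) / 2)) := by
    have h1 : Tendsto (fun n => (dist z y - (dist y (u n) - dist z (u n))) / 2) atTop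
        (nhds ((dist z y - c) / 2)) := (tendsto_const_nhds.sub hc).div_const 2
    refine h1.congr fun n => ?_
    simp only [gp]
    ring
  have Hv : Tendsto (fun m => gp z y (v m)) atTop (nhds ((dist z y - c') / 2)) := by
    have h1 : Tendsto (fun m => (dist z y - (dist y (v m) - dist z (v m))) / 2) atTop
        (nhds ((dist z y - c') / 2)) := (tendsto_const_nhds.sub hc').div_const 2
    refine h1.congr fun m => ?_
    simp only [gp]
    ring
  have key : ∀ ε : ℝ, 0 < ε → (dist z y - c') / 2 - ε - δ ≤ (dist z y - c) / 2 := by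
    intro ε hε
    obtain ⟨N, K, hNK⟩ := joint_iff.1 huv ((dist z y - c') / 2 + dist x₀ z)
    have hev : ∀ᶠ m in atTop, (dist z y - c') / 2 - ε < gp z y (v m) :=
      Hv.eventually (lt_mem_nhds (by linarith))
    obtain ⟨m, hm1, hm2⟩ := (hev.and (eventually_ge_atTop K)).exists
    have keyn : ∀ n, N ≤ n → (dist z y - c') / 2 - ε - δ ≤ gp z y (u n) := by
      intro n hn
      have h1 : (dist z y - c') / 2 ≤ gp z (v m) (u n) := by
        have h2 := hNK n m hn hm2
        have h3 := gp_base x₀ z (u n) (v m)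
        have h4 : gp z (u n) (v m) = gp z (v m) (u n) := gp_symm z (u n) (v m)
        linarith
      have h4 := hδ z y (u n) (v m)
      have h5 : (dist z y - c') / 2 - ε ≤ min (gp z y (v m)) (gp z (v m) (u n)) :=
        le_min (le_of_lt hm1) (by linarith)
      linarith
    exact ge_of_tendsto Hu (eventually_atTop.2 ⟨N, keyn⟩)
  by_contra hlt
  push_neg at hlt
  have hε : 0 < (c - (c' + 2 * δ)) / 4 := by linarith
  have := key _ hε
  linarith

/-- the sequences `g⁻ᵐ ∘ u` all converge to `ξ`. -/
lemma seq_conv (δ : ℝ)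
    (hδ : ∀ x y z w : X, min (gp x y w) (gp x w z) - δ ≤ gp x y z)
    (x₀ : X) (u : ℕ → X)
    (hu : Tendsto (fun p : ℕ × ℕ => gp x₀ (u p.1) (u p.2)) atTop atTop)
    (g : X ≃ᵢ X)
    (hfix : Tendsto (fun n => gp x₀ (u n) (g (u n))) atTop atTop) :
    ∀ m : ℕ, Tendsto (fun p : ℕ × ℕ => gp x₀ (u p.1) ((⇑g.symm)^[m] (u p.2))) atTop atTop := by
  intro m
  induction m with
  | zero => simpa using hu
  | succ m IH =>
    rw [joint_iff] at IH ⊢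
    intro C
    obtain ⟨N₁, K, hNK⟩ := IH (C + δ + dist x₀ (g x₀))
    obtain ⟨N₂, hN₂⟩ := eventually_atTop.1
      (hfix.eventually_ge_atTop (C + δ + dist x₀ (g x₀)))
    refine ⟨max N₁ N₂, K, fun n k hn hk => ?_⟩
    have hn₁ : N₁ ≤ n := le_trans (le_max_left _ _) hn
    have hn₂ : N₂ ≤ n := le_trans (le_max_right _ _) hn
    set w : X := (⇑g.symm)^[m] (u k) with hw
    have hit : (⇑g.symm)^[m + 1] (u k) = g.symm w := by
      rw [Function.iterate_succ_apply']
    have e0 : g (g.symm w) = w := g.apply_symm_apply w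
    have e1 : gp x₀ (u n) (g.symm w) = gp (g x₀) (g (u n)) w := by
      conv_rhs => rw [← e0]
      exact (gp_isom g x₀ (u n) (g.symm w)).symm
    have e2 := gp_base x₀ (g x₀) (g (u n)) w
    have e3 := hδ x₀ (g (u n)) w (u n)
    have e4 : C + δ + dist x₀ (g x₀) ≤ gp x₀ (g (u n)) (u n) := by
      have := hN₂ n hn₂
      rw [gp_symm]
      exact this
    have e5 : C + δ + dist x₀ (g x₀) ≤ gp x₀ (u n) w := hNK n k hn₁ hk
    have e6 : C + δ + dist x₀ (g x₀) ≤ min (gp x₀ (g (u n)) (u n)) (gp x₀ (u n) w) :=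
      le_min e4 e5
    have hfin : C ≤ gp x₀ (u n) (g.symm w) := by rw [e1]; linarith
    simpa [hit] using hfin

/-- linear bound for quasimorphisms -/
lemma qm_bound (a : ℕ → ℝ) (C β : ℝ) (hC : 0 ≤ C)
    (hqm : ∀ m n : ℕ, |a (m + n) - a m - a n| ≤ C) (h0 : a 0 = 0)
    (hβ : Tendsto (fun n : ℕ => a n / n) atTop (nhds β)) :
    ∀ n : ℕ, |a n - n * β| ≤ C := by
  intro n
  rcases Nat.eq_zero_or_pos n with hn | hn
  · subst hn
    simpa [h0] using hC
  · have hk : ∀ k : ℕ, |a (k * n) - k * a n| ≤ C * k := by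
      intro k
      induction k with
      | zero => simp [h0]
      | succ k IH =>
        have h1 := hqm (k * n) n
        have hidx : (k + 1) * n = k * n + n := by ring
        have key : a ((k + 1) * n) - ((k : ℝ) + 1) * a n =
            (a (k * n + n) - a (k * n) - a n) + (a (k * n) - (k : ℝ) * a n) := by
          rw [hidx]; ring
        have habs : |a ((k + 1) * n) - ((k : ℝ) + 1) * a n| ≤ C + C * k := by
          rw [key]
          exact le_trans (abs_add_le _ _) (by linarith)
        have hc : ((k + 1 : ℕ) : ℝ) = (k : ℝ) + 1 := by push_cast; ring
        rw [hc]
        calc |a ((k + 1) * n) - ((k : ℝ) + 1) * a n| ≤ C + C * k := habs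
          _ = C * ((k : ℝ) + 1) := by ring
    have hnR : (0 : ℝ) < n := by exact_mod_cast hn
    have hne : (n : ℝ) ≠ 0 := ne_of_gt hnR
    have hmulat : Tendsto (fun k : ℕ => k * n) atTop atTop := by
      refine tendsto_atTop_mono (fun k => ?_) tendsto_id
      exact Nat.le_mul_of_pos_right k hn
    have hsub : Tendsto (fun k : ℕ => a (k * n) / ((k * n : ℕ) : ℝ)) atTop (nhds β) :=
      hβ.comp hmulat
    have hdiff : Tendsto (fun k : ℕ => a (k * n) / ((k * n : ℕ) : ℝ) - a n / n) atTop
        (nhds (β - a n / n)) := hsub.sub tendsto_const_nhds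
    have hbound : ∀ᶠ k : ℕ in atTop, |a (k * n) / ((k * n : ℕ) : ℝ) - a n / n| ≤ C / n := by
      filter_upwards [eventually_ge_atTop 1] with k hk1
      have hkR : (0 : ℝ) < k := by exact_mod_cast hk1
      have hknR : (0 : ℝ) < ((k * n : ℕ) : ℝ) := by
        push_cast; positivity
      have heq : a (k * n) / ((k * n : ℕ) : ℝ) - a n / n =
          (a (k * n) - k * a n) / ((k * n : ℕ) : ℝ) := by
        push_cast
        field_simp
      rw [heq, abs_div, abs_of_pos hknR]
      rw [div_le_div_iff₀ hknR hnR]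
      calc |a (k * n) - ↑k * a n| * ↑n ≤ (C * k) * n :=
            mul_le_mul_of_nonneg_right (hk k) (le_of_lt hnR)
        _ = C * ((k * n : ℕ) : ℝ) := by push_cast; ring
    have hfin : |β - a n / n| ≤ C / n := by
      have habs : Tendsto (fun k : ℕ => |a (k * n) / ((k * n : ℕ) : ℝ) - a n / n|) atTop
          (nhds |β - a n / n|) := hdiff.abs
      exact le_of_tendsto habs hbound
    have heq2 : a n - n * β = -((n : ℝ) * (β - a n / n)) := by
      field_simp
      ring
    rw [heq2, abs_neg, abs_mul, abs_of_pos hnR]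
    calc (n : ℝ) * |β - a n / n| ≤ n * (C / n) :=
          mul_le_mul_of_nonneg_left hfin (le_of_lt hnR)
      _ = C := by field_simp

end Aux

/-- Let `g` be an isometry of a hyperbolic space `X` fixing the boundary point `ξ`
(represented by the Cauchy–Gromov sequence `u`), let `h` be a horokernel based at `ξ` and
`β = β_ξ(g) = lim h(x, gⁿx)/n` the Busemann quasicharacter.  If `β > 0` then `g` is a
hyperbolic isometry with attracting fixed point `ξ`; if `β ≠ 0` then `g` is hyperbolic;
conversely if `g` is hyperbolic then `β ≠ 0`. -/
theorem stmt_14 {X : Type*} [MetricSpace X]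
    (δ : ℝ)
    (hδ : ∀ x y z w : X, min (gp x y w) (gp x w z) - δ ≤ gp x y z)
    (x₀ : X) (u : ℕ → X)
    (hu : Tendsto (fun p : ℕ × ℕ => gp x₀ (u p.1) (u p.2)) atTop atTop)
    (h : X → X → ℝ)
    (hh : ∀ x y : X, Tendsto (fun n => dist x (u n) - dist y (u n)) atTop (nhds (h x y)))
    (g : X ≃ᵢ X)
    (hfix : Tendsto (fun n => gp x₀ (u n) (g (u n))) atTop atTop)
    (x : X) (β : ℝ)
    (hβ : Tendsto (fun n : ℕ => h x ((⇑g)^[n] x) / n) atTop (nhds β)) :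
    (0 < β → IsHyperbolicIsom g ∧
      Tendsto (fun p : ℕ × ℕ => gp x₀ ((⇑g)^[p.1] x) (u p.2)) atTop atTop) ∧
    (β ≠ 0 → IsHyperbolicIsom g) ∧
    (IsHyperbolicIsom g → β ≠ 0) := by
  -- δ is nonnegative
  have hδ0 : 0 ≤ δ := by
    have h1 := hδ x₀ x₀ x₀ x₀
    simp only [gp, dist_self] at h1
    simp only [min_self] at h1
    linarith
  -- |h y z| ≤ dist y z
  have hF : ∀ y z : X, |h y z| ≤ dist y z := by
    intro y z
    have hb : ∀ n, |dist y (u n) - dist z (u n)| ≤ dist y z := fun n => abs_dist_sub_le _ _ _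
    have h1 : h y z ≤ dist y z :=
      le_of_tendsto (hh y z) (Eventually.of_forall fun n => (abs_le.1 (hb n)).2)
    have h2 : -dist y z ≤ h y z :=
      ge_of_tendsto (hh y z) (Eventually.of_forall fun n => (abs_le.1 (hb n)).1)
    exact abs_le.2 ⟨h2, h1⟩
  -- cocycle property
  have hcoc : ∀ y z w : X, h y w = h y z + h z w := by
    intro y z w
    refine tendsto_nhds_unique (hh y w) ?_
    exact ((hh y z).add (hh z w)).congr fun n => by ring
  have hxx : ∀ y : X, h y y = 0 := by
    intro y
    refine tendsto_nhds_unique (hh y y) ?_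
    simpa using (tendsto_const_nhds : Tendsto (fun _ : ℕ => (0 : ℝ)) atTop (nhds 0))
  -- limits of Gromov products against u
  have hgp_lim : ∀ p y : X, Tendsto (fun m => gp p y (u m)) atTop
      (nhds ((dist p y + h p y) / 2)) := by
    intro p y
    have h1 : Tendsto (fun m => (dist p y + (dist p (u m) - dist y (u m))) / 2) atTop
        (nhds ((dist p y + h p y) / 2)) := (tendsto_const_nhds.add (hh p y)).div_const 2
    exact h1.congr fun m => by simp only [gp]; ring
  -- iterates are isometries
  have hiso : ∀ (m : ℕ) (a b : X), dist ((⇑g)^[m] a) ((⇑g)^[m] b) = dist a b := by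
    intro m
    induction m with
    | zero => simp
    | succ m IH =>
      intro a b
      rw [Function.iterate_succ_apply', Function.iterate_succ_apply',
        IsometryEquiv.dist_eq, IH]
  have hdistu : ∀ (m : ℕ) (y : X) (k : ℕ),
      dist ((⇑g)^[m] y) (u k) = dist y ((⇑g.symm)^[m] (u k)) := by
    intro m y k
    have hli : Function.LeftInverse (⇑g) (⇑g.symm) := g.apply_symm_apply
    have e : (⇑g)^[m] ((⇑g.symm)^[m] (u k)) = u k := (hli.iterate m) (u k)
    calc dist ((⇑g)^[m] y) (u k)
        = dist ((⇑g)^[m] y) ((⇑g)^[m] ((⇑g.symm)^[m] (u k))) := by rw [e]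
      _ = dist y ((⇑g.symm)^[m] (u k)) := hiso m _ _
  -- quasi-invariance of the horokernel
  have hseq := seq_conv δ hδ x₀ u hu g hfix
  have hCmp : ∀ (m : ℕ) (y z : X), |h ((⇑g)^[m] y) ((⇑g)^[m] z) - h y z| ≤ 2 * δ := by
    intro m y z
    have hv : Tendsto (fun k => dist y ((⇑g.symm)^[m] (u k)) - dist z ((⇑g.symm)^[m] (u k)))
        atTop (nhds (h ((⇑g)^[m] y) ((⇑g)^[m] z))) := by
      refine (hh ((⇑g)^[m] y) ((⇑g)^[m] z)).congr fun k => ?_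
      rw [hdistu, hdistu]
    have hsw : Tendsto (fun p : ℕ × ℕ => gp x₀ ((⇑g.symm)^[m] (u p.1)) (u p.2)) atTop atTop := by
      have h1 := joint_swap (hseq m)
      exact h1.congr fun p => gp_symm x₀ (u p.2) ((⇑g.symm)^[m] (u p.1))
    have h1 := horo_comp δ hδ x₀ u (fun k => (⇑g.symm)^[m] (u k)) (hseq m) y z
      (h y z) (h ((⇑g)^[m] y) ((⇑g)^[m] z)) (hh y z) hv
    have h2 := horo_comp δ hδ x₀ (fun k => (⇑g.symm)^[m] (u k)) u hsw y z
      (h ((⇑g)^[m] y) ((⇑g)^[m] z)) (h y z) hv (hh y z)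
    exact abs_le.2 ⟨by linarith, by linarith⟩
  -- the quasimorphism estimate
  have hqm : ∀ m n : ℕ,
      |h x ((⇑g)^[m + n] x) - h x ((⇑g)^[m] x) - h x ((⇑g)^[n] x)| ≤ 2 * δ := by
    intro m n
    have hc : h x ((⇑g)^[m + n] x) = h x ((⇑g)^[m] x) + h ((⇑g)^[m] x) ((⇑g)^[m + n] x) :=
      hcoc x ((⇑g)^[m] x) ((⇑g)^[m + n] x)
    have hidx : (⇑g)^[m + n] x = (⇑g)^[m] ((⇑g)^[n] x) := by
      rw [Function.iterate_add_apply]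
    have h2 : |h ((⇑g)^[m] x) ((⇑g)^[m + n] x) - h x ((⇑g)^[n] x)| ≤ 2 * δ := by
      rw [hidx]
      exact hCmp m x ((⇑g)^[n] x)
    have heq : h x ((⇑g)^[m + n] x) - h x ((⇑g)^[m] x) - h x ((⇑g)^[n] x) =
        h ((⇑g)^[m] x) ((⇑g)^[m + n] x) - h x ((⇑g)^[n] x) := by
      rw [hc]; ring
    rw [heq]; exact h2
  have hE : ∀ n : ℕ, |h x ((⇑g)^[n] x) - n * β| ≤ 2 * δ :=
    qm_bound (fun n => h x ((⇑g)^[n] x)) (2 * δ) β (by linarith) hqm (by simpa using hxx x) hβ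
  -- β ≠ 0 implies hyperbolic
  have hyp : β ≠ 0 → IsHyperbolicIsom g := by
    intro hβ0 y
    have hsubadd : Subadditive (fun n => dist y ((⇑g)^[n] y)) := by
      intro m n
      have h1 : dist y ((⇑g)^[m + n] y) ≤
          dist y ((⇑g)^[m] y) + dist ((⇑g)^[m] y) ((⇑g)^[m + n] y) := dist_triangle _ _ _
      have h2 : dist ((⇑g)^[m] y) ((⇑g)^[m + n] y) = dist y ((⇑g)^[n] y) := by
        rw [Function.iterate_add_apply]
        exact hiso m y ((⇑g)^[n] y)
      linarith
    have hbdd : BddBelow (Set.range fun n : ℕ => dist y ((⇑g)^[n] y) / n) := by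
      refine ⟨0, ?_⟩
      rintro _ ⟨n, rfl⟩
      positivity
    have hlim := hsubadd.tendsto_lim hbdd
    refine ⟨hsubadd.lim, ?_, hlim⟩
    have hlow : ∀ᶠ n : ℕ in atTop,
        |β| - (2 * δ + 2 * dist x y) / n ≤ dist y ((⇑g)^[n] y) / n := by
      filter_upwards [eventually_ge_atTop 1] with n hn1
      have hnR : (0 : ℝ) < n := by exact_mod_cast hn1
      have hne : (n : ℝ) ≠ 0 := ne_of_gt hnR
      have t1 := dist_triangle x y ((⇑g)^[n] x)
      have t2 := dist_triangle y ((⇑g)^[n] y) ((⇑g)^[n] x)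
      have h2 : dist ((⇑g)^[n] y) ((⇑g)^[n] x) = dist x y := by
        rw [hiso n y x, dist_comm]
      have h3 : |h x ((⇑g)^[n] x)| ≤ dist x ((⇑g)^[n] x) := hF x ((⇑g)^[n] x)
      have h4 : (n : ℝ) * |β| - 2 * δ ≤ |h x ((⇑g)^[n] x)| := by
        have h5 : |(n : ℝ) * β| - |h x ((⇑g)^[n] x)| ≤ |(n : ℝ) * β - h x ((⇑g)^[n] x)| :=
          abs_sub_abs_le_abs_sub _ _
        have h6 : |(n : ℝ) * β - h x ((⇑g)^[n] x)| ≤ 2 * δ := by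
          rw [abs_sub_comm]; exact hE n
        have h7 : |(n : ℝ) * β| = n * |β| := by
          rw [abs_mul, abs_of_pos hnR]
        linarith
      have h8 : (n : ℝ) * |β| - (2 * δ + 2 * dist x y) ≤ dist y ((⇑g)^[n] y) := by linarith
      have h9 : ((n : ℝ) * |β| - (2 * δ + 2 * dist x y)) / n ≤ dist y ((⇑g)^[n] y) / n :=
        (div_le_div_iff_of_pos_right hnR).2 h8
      have h10 : ((n : ℝ) * |β| - (2 * δ + 2 * dist x y)) / n =
          |β| - (2 * δ + 2 * dist x y) / n := by
        field_simp
      linarith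
    have hRlim : Tendsto (fun n : ℕ => |β| - (2 * δ + 2 * dist x y) / n) atTop
        (nhds (|β| - 0)) :=
      tendsto_const_nhds.sub (tendsto_const_div_atTop_nhds_zero_nat _)
    have hge : |β| - 0 ≤ hsubadd.lim := le_of_tendsto_of_tendsto hRlim hlim hlow
    have hpos : 0 < |β| := abs_pos.2 hβ0
    linarith
  refine ⟨?_, hyp, ?_⟩
  · -- β > 0 : hyperbolic with attracting fixed point ξ
    intro hβpos
    refine ⟨hyp (ne_of_gt hβpos), ?_⟩
    have hFlb : ∀ n : ℕ, h x₀ x + n * β - 2 * δ ≤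
        (dist x₀ ((⇑g)^[n] x) + h x₀ ((⇑g)^[n] x)) / 2 := by
      intro n
      have h1 : h x₀ ((⇑g)^[n] x) = h x₀ x + h x ((⇑g)^[n] x) := hcoc x₀ x _
      have h2 : h x₀ ((⇑g)^[n] x) ≤ dist x₀ ((⇑g)^[n] x) :=
        le_trans (le_abs_self _) (hF _ _)
      have h4 : (n : ℝ) * β - 2 * δ ≤ h x ((⇑g)^[n] x) := by
        have := abs_le.1 (hE n)
        linarith [this.1]
      linarith
    have hFtop : Tendsto (fun n : ℕ => (dist x₀ ((⇑g)^[n] x) + h x₀ ((⇑g)^[n] x)) / 2)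
        atTop atTop := by
      have hmul : Tendsto (fun n : ℕ => (n : ℝ) * β) atTop atTop :=
        (tendsto_natCast_atTop_atTop (R := ℝ)).atTop_mul_const hβpos
      have hadd : Tendsto (fun n : ℕ => (n : ℝ) * β + (h x₀ x - 2 * δ)) atTop atTop :=
        tendsto_atTop_add_const_right _ _ hmul
      exact tendsto_atTop_mono (fun n => by have := hFlb n; linarith) hadd
    rw [joint_iff]
    intro C
    obtain ⟨Nu, Ku, hu'⟩ := joint_iff.1 hu (C + δ)
    obtain ⟨N, hN⟩ := eventually_atTop.1 (hFtop.eventually_ge_atTop (C + δ + 1))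
    refine ⟨N, max Nu Ku, fun n k hn hk => ?_⟩
    have hev : ∀ᶠ j in atTop,
        (dist x₀ ((⇑g)^[n] x) + h x₀ ((⇑g)^[n] x)) / 2 - 1 < gp x₀ ((⇑g)^[n] x) (u j) :=
      (hgp_lim x₀ ((⇑g)^[n] x)).eventually (lt_mem_nhds (by linarith))
    obtain ⟨j, hj1, hj2⟩ := (hev.and (eventually_ge_atTop (max Nu Ku))).exists
    have hgpj : C + δ ≤ gp x₀ ((⇑g)^[n] x) (u j) := by
      have := hN n hn
      linarith
    have hjk : C + δ ≤ gp x₀ (u j) (u k) :=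
      hu' j k (le_trans (le_max_left _ _) hj2) (le_trans (le_max_right _ _) hk)
    have e3 := hδ x₀ ((⇑g)^[n] x) (u k) (u j)
    have hmin : C + δ ≤ min (gp x₀ ((⇑g)^[n] x) (u j)) (gp x₀ (u j) (u k)) :=
      le_min hgpj hjk
    linarith
  · -- hyperbolic implies β ≠ 0
    intro hhyp hβ0
    obtain ⟨ℓ, hℓpos, hℓ⟩ := hhyp x
    have hAn : ∀ n : ℕ, |h x ((⇑g)^[n] x)| ≤ 2 * δ := by
      intro n
      have := hE n
      rw [hβ0] at this
      simpa using this
    have hdouble : ∀ n : ℕ, dist x ((⇑g)^[2 * n] x) ≤ dist x ((⇑g)^[n] x) + 6 * δ := by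
      intro n
      have hidx : (⇑g)^[2 * n] x = (⇑g)^[n] ((⇑g)^[n] x) := by
        rw [two_mul, Function.iterate_add_apply]
      have hpq : dist ((⇑g)^[n] x) ((⇑g)^[2 * n] x) = dist x ((⇑g)^[n] x) := by
        rw [hidx]
        exact hiso n x ((⇑g)^[n] x)
      have L1 := hgp_lim ((⇑g)^[n] x) x
      have L2 := hgp_lim ((⇑g)^[n] x) ((⇑g)^[2 * n] x)
      have L2' : Tendsto (fun m => gp ((⇑g)^[n] x) (u m) ((⇑g)^[2 * n] x)) atTop
          (nhds ((dist ((⇑g)^[n] x) ((⇑g)^[2 * n] x) + h ((⇑g)^[n] x) ((⇑g)^[2 * n] x)) / 2)) :=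
        L2.congr fun m => gp_symm _ _ _
      have hub : min ((dist ((⇑g)^[n] x) x + h ((⇑g)^[n] x) x) / 2)
          ((dist ((⇑g)^[n] x) ((⇑g)^[2 * n] x) + h ((⇑g)^[n] x) ((⇑g)^[2 * n] x)) / 2) - δ
          ≤ gp ((⇑g)^[n] x) x ((⇑g)^[2 * n] x) :=
        le_of_tendsto ((L1.min L2').sub_const δ)
          (Eventually.of_forall fun m => hδ ((⇑g)^[n] x) x ((⇑g)^[2 * n] x) (u m))
      -- lower bounds on the horokernel terms
      have hb1 : -(2 * δ) ≤ h ((⇑g)^[n] x) x := by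
        have hc1 : h x x = h x ((⇑g)^[n] x) + h ((⇑g)^[n] x) x := hcoc x ((⇑g)^[n] x) x
        have hc2 := hxx x
        have := abs_le.1 (hAn n)
        linarith [this.2]
      have hb2 : -(4 * δ) ≤ h ((⇑g)^[n] x) ((⇑g)^[2 * n] x) := by
        have hc1 : |h ((⇑g)^[n] x) ((⇑g)^[n] ((⇑g)^[n] x)) - h x ((⇑g)^[n] x)| ≤ 2 * δ :=
          hCmp n x ((⇑g)^[n] x)
        rw [← hidx] at hc1
        have hc2 := abs_le.1 hc1
        have hc3 := abs_le.1 (hAn n)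
        linarith [hc2.1, hc3.1]
      have hdc : dist ((⇑g)^[n] x) x = dist x ((⇑g)^[n] x) := dist_comm _ _
      have hminlb : (dist x ((⇑g)^[n] x) - 4 * δ) / 2 ≤
          min ((dist x ((⇑g)^[n] x) + h ((⇑g)^[n] x) x) / 2)
          ((dist x ((⇑g)^[n] x) + h ((⇑g)^[n] x) ((⇑g)^[2 * n] x)) / 2) :=
        le_min (by linarith) (by linarith)
      have hgpu : gp ((⇑g)^[n] x) x ((⇑g)^[2 * n] x) =
          (dist ((⇑g)^[n] x) x + dist ((⇑g)^[n] x) ((⇑g)^[2 * n] x) -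
            dist x ((⇑g)^[2 * n] x)) / 2 := rfl
      rw [hgpu, hdc, hpq] at hub
      linarith
    have hpow : ∀ k : ℕ, dist x ((⇑g)^[2 ^ k] x) ≤ dist x ((⇑g)^[1] x) + 6 * δ * k := by
      intro k
      induction k with
      | zero => simp
      | succ k IH =>
        have hidx : 2 ^ (k + 1) = 2 * 2 ^ k := by rw [pow_succ]; ring
        rw [hidx]
        calc dist x ((⇑g)^[2 * 2 ^ k] x) ≤ dist x ((⇑g)^[2 ^ k] x) + 6 * δ := hdouble (2 ^ k)
          _ ≤ dist x ((⇑g)^[1] x) + 6 * δ * k + 6 * δ := by linarith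
          _ = dist x ((⇑g)^[1] x) + 6 * δ * ((k : ℕ) + 1 : ℕ) := by push_cast; ring
    have hsub2 : Tendsto (fun k : ℕ => dist x ((⇑g)^[2 ^ k] x) / ((2 ^ k : ℕ) : ℝ)) atTop
        (nhds ℓ) :=
      hℓ.comp (tendsto_pow_atTop_atTop_of_one_lt (by norm_num))
    have hzero : Tendsto (fun k : ℕ => (dist x ((⇑g)^[1] x) + 6 * δ * k) / ((2 ^ k : ℕ) : ℝ))
        atTop (nhds 0) := by
      have e : ∀ k : ℕ, (dist x ((⇑g)^[1] x) + 6 * δ * k) / ((2 ^ k : ℕ) : ℝ) =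
          dist x ((⇑g)^[1] x) * (1 / 2 : ℝ) ^ k +
            6 * δ * ((k : ℝ) * (1 / 2 : ℝ) ^ k) := by
        intro k
        have h2k : ((2 ^ k : ℕ) : ℝ) = (2 : ℝ) ^ k := by push_cast; ring
        have hne : ((2 : ℝ) ^ k) ≠ 0 := by positivity
        rw [h2k]
        field_simp
        rw [mul_assoc _ ((2 : ℝ) ^ k), ← mul_pow]; norm_num
      have h1 : Tendsto (fun k : ℕ => (1 / 2 : ℝ) ^ k) atTop (nhds 0) :=
        tendsto_pow_atTop_nhds_zero_of_lt_one (by norm_num) (by norm_num)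
      have h2 : Tendsto (fun k : ℕ => (k : ℝ) * (1 / 2 : ℝ) ^ k) atTop (nhds 0) :=
        tendsto_self_mul_const_pow_of_lt_one (by norm_num) (by norm_num)
      have h3 := (h1.const_mul (dist x ((⇑g)^[1] x))).add (h2.const_mul (6 * δ))
      have h4 : dist x ((⇑g)^[1] x) * 0 + 6 * δ * 0 = 0 := by ring
      rw [h4] at h3
      exact h3.congr fun k => (e k).symm
    have hle : ℓ ≤ 0 := by
      refine le_of_tendsto_of_tendsto hsub2 hzero ?_
      refine Eventually.of_forall fun k => ?_
      have hpos : (0 : ℝ) < ((2 ^ k : ℕ) : ℝ) := by positivity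
      exact (div_le_div_iff_of_pos_right hpos).2 (hpow k)
    linarith
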